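/- If f : [a,b] ⊆ (0,∞) → ℝ is symmetrized p-convex on [a,b] (p ≠ 0), then for any x,y ∈ [a,b] with x ≠ y: (1/2)[f(((x^p + y^p)/2)^(1/p)) + f((a^p + b^p - (x^p + y^p)/2)^(1/p))] ≤ (p/(2(y^p - x^p)))[∫_x^y f(t)·t^(p-1) dt + ∫_{(a^p+b^p-y^p)^(1/p)}^{(a^p+b^p-x^p)^(1/p)} f(t)·t^(p-1) dt] ≤ (1/4)[f(x) + f(y) + f((a^p + b^p - x^p)^(1/p)) + f((a^p + b^p - y^p)^(1/p))]. -/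

import Mathlib

noncomputable section
open Real Set MeasureTheory intervalIntegral

/-- `f` is p-convex on `[a,b]`. -/
def PConvexOn (p a b : ℝ) (f : ℝ → ℝ) : Prop :=
  ∀ x ∈ Set.Icc a b, ∀ y ∈ Set.Icc a b, ∀ t ∈ Set.Icc (0:ℝ) 1,
    f ((t * x ^ p + (1 - t) * y ^ p) ^ (1/p)) ≤ t * f x + (1 - t) * f y

/-- The p-symmetrical transform of `f` on `[a,b]`. -/
def PSym (p a b : ℝ) (f : ℝ → ℝ) : ℝ → ℝ :=
  fun x => (f x + f ((a ^ p + b ^ p - x ^ p) ^ (1/p))) / 2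

namespace HHAux

variable {p : ℝ}

lemma rpow_rpow_inv' (hp : p ≠ 0) {t : ℝ} (ht : 0 < t) : (t ^ p) ^ (1/p) = t := by
  rw [← Real.rpow_mul ht.le, mul_one_div_cancel hp, Real.rpow_one]

lemma rpow_inv_rpow' (hp : p ≠ 0) {u : ℝ} (hu : 0 < u) : (u ^ (1/p)) ^ p = u := by
  rw [← Real.rpow_mul hu.le, one_div_mul_cancel hp, Real.rpow_one]

lemma image_rpow_Ioo (hp : p ≠ 0) {x y : ℝ} (hx : 0 < x) (hxy : x < y) :
    (fun t : ℝ => t ^ p) '' Ioo x y =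
      if 0 < p then Ioo (x ^ p) (y ^ p) else Ioo (y ^ p) (x ^ p) := by
  rcases lt_or_gt_of_ne hp with hneg | hpos
  · rw [if_neg (by linarith)]
    ext u
    constructor
    · rintro ⟨t, ⟨ht1, ht2⟩, rfl⟩
      exact ⟨Real.rpow_lt_rpow_of_neg (hx.trans ht1) ht2 hneg,
        Real.rpow_lt_rpow_of_neg hx ht1 hneg⟩
    · rintro ⟨h1, h2⟩
      have hu : 0 < u := lt_trans (Real.rpow_pos_of_pos (hx.trans hxy) p) h1
      refine ⟨u ^ (1/p), ⟨?_, ?_⟩, rpow_inv_rpow' hp hu⟩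
      · have := Real.rpow_lt_rpow_of_neg hu h2 (one_div_neg.mpr hneg)
        rwa [rpow_rpow_inv' hp hx] at this
      · have := Real.rpow_lt_rpow_of_neg (Real.rpow_pos_of_pos (hx.trans hxy) p) h1
          (one_div_neg.mpr hneg)
        rwa [rpow_rpow_inv' hp (hx.trans hxy)] at this
  · rw [if_pos hpos]
    ext u
    constructor
    · rintro ⟨t, ⟨ht1, ht2⟩, rfl⟩
      exact ⟨Real.rpow_lt_rpow hx.le ht1 hpos, Real.rpow_lt_rpow (hx.trans ht1).le ht2 hpos⟩
    · rintro ⟨h1, h2⟩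
      have hu : 0 < u := lt_trans (Real.rpow_pos_of_pos hx p) h1
      refine ⟨u ^ (1/p), ⟨?_, ?_⟩, rpow_inv_rpow' hp hu⟩
      · have := Real.rpow_lt_rpow (Real.rpow_pos_of_pos hx p).le h1 (one_div_pos.mpr hpos)
        rwa [rpow_rpow_inv' hp hx] at this
      · have := Real.rpow_lt_rpow hu.le h2 (one_div_pos.mpr hpos)
        rwa [rpow_rpow_inv' hp (hx.trans hxy)] at this

lemma hasDerivWithin_rpow (hp : p ≠ 0) {x y : ℝ} (hx : 0 < x) :
    ∀ t ∈ Ioo x y, HasDerivWithinAt (fun t : ℝ => t ^ p) (p * t ^ (p - 1)) (Ioo x y) t :=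
  fun t ht => (Real.hasDerivAt_rpow_const (Or.inl (ne_of_gt (hx.trans ht.1)))).hasDerivWithinAt

lemma injOn_rpow (hp : p ≠ 0) {x y : ℝ} (hx : 0 < x) :
    InjOn (fun t : ℝ => t ^ p) (Ioo x y) := by
  intro s hs t ht hst
  have hs0 : 0 < s := hx.trans hs.1
  have ht0 : 0 < t := hx.trans ht.1
  have h2 : (s ^ p) ^ (1/p) = (t ^ p) ^ (1/p) := congrArg (fun u : ℝ => u ^ (1/p)) hst
  rwa [rpow_rpow_inv' hp hs0, rpow_rpow_inv' hp ht0] at h2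

lemma abs_deriv_smul_eq (hp : p ≠ 0) (f : ℝ → ℝ) {x y : ℝ} (hx : 0 < x) :
    ∀ t ∈ Ioo x y, |p * t ^ (p - 1)| • f ((t ^ p) ^ (1/p)) = |p| * (f t * t ^ (p - 1)) := by
  intro t ht
  have ht0 : 0 < t := hx.trans ht.1
  rw [rpow_rpow_inv' hp ht0, smul_eq_mul, abs_mul,
    abs_of_pos (Real.rpow_pos_of_pos ht0 (p - 1))]
  ring

/-- Substitution `u = t ^ p` for the integral, `x ≤ y` case. -/
lemma subst_key_le (hp : p ≠ 0) (f : ℝ → ℝ) {x y : ℝ} (hx : 0 < x) (hxy : x ≤ y) :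
    (∫ u in x ^ p..y ^ p, f (u ^ (1/p))) = p * ∫ t in x..y, f t * t ^ (p - 1) := by
  rcases eq_or_lt_of_le hxy with rfl | hxy
  · simp
  have key := integral_image_eq_integral_abs_deriv_smul measurableSet_Ioo
      (hasDerivWithin_rpow hp hx (y := y)) (injOn_rpow hp hx) (fun u => f (u ^ (1/p)))
  rw [image_rpow_Ioo hp hx hxy] at key
  have hset : (∫ t in Ioo x y, |p * t ^ (p - 1)| • f ((t ^ p) ^ (1/p)))
      = |p| * ∫ t in Ioo x y, f t * t ^ (p - 1) := by
    rw [← MeasureTheory.integral_const_mul]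
    exact setIntegral_congr_fun measurableSet_Ioo (abs_deriv_smul_eq hp f hx)
  have hIoo : (∫ t in x..y, f t * t ^ (p - 1)) = ∫ t in Ioo x y, f t * t ^ (p - 1) := by
    rw [integral_of_le hxy.le, integral_Ioc_eq_integral_Ioo]
  rcases lt_or_gt_of_ne hp with hneg | hpos
  · rw [if_neg (by linarith)] at key
    have horder : y ^ p ≤ x ^ p := (Real.rpow_lt_rpow_of_neg hx hxy hneg).le
    rw [intervalIntegral.integral_symm, integral_of_le horder, integral_Ioc_eq_integral_Ioo,
      key, hset, hIoo, abs_of_neg hneg]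
    ring
  · rw [if_pos hpos] at key
    have horder : x ^ p ≤ y ^ p := (Real.rpow_lt_rpow hx.le hxy hpos).le
    rw [integral_of_le horder, integral_Ioc_eq_integral_Ioo, key, hset, hIoo, abs_of_pos hpos]

/-- Substitution `u = t ^ p`, any order. -/
lemma subst_key (hp : p ≠ 0) (f : ℝ → ℝ) {x y : ℝ} (hx : 0 < x) (hy : 0 < y) :
    (∫ u in x ^ p..y ^ p, f (u ^ (1/p))) = p * ∫ t in x..y, f t * t ^ (p - 1) := by
  rcases le_total x y with h | h
  · exact subst_key_le hp f hx h
  · have := subst_key_le hp f hy h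
    rw [intervalIntegral.integral_symm (y ^ p) (x ^ p), this,
      intervalIntegral.integral_symm x y]
    ring

/-- Integrability transfer through the substitution. -/
lemma integrable_subst (hp : p ≠ 0) (f : ℝ → ℝ) {x y : ℝ} (hx : 0 < x) (hxy : x < y)
    (hi : IntervalIntegrable (fun t => f t * t ^ (p - 1)) volume x y) :
    IntervalIntegrable (fun u => f (u ^ (1/p))) volume (x ^ p) (y ^ p) := by
  have key := (integrableOn_image_iff_integrableOn_abs_deriv_smul measurableSet_Ioo
      (hasDerivWithin_rpow hp hx (y := y)) (injOn_rpow hp hx) (fun u => f (u ^ (1/p))))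
  rw [image_rpow_Ioo hp hx hxy] at key
  have hint' : IntegrableOn (fun t => |p * t ^ (p - 1)| • f ((t ^ p) ^ (1/p))) (Ioo x y)
      volume := by
    have h1 : IntegrableOn (fun t => |p| * (f t * t ^ (p - 1))) (Ioo x y) volume := by
      have := (hi.1).mono_set Ioo_subset_Ioc_self
      exact this.const_mul |p|
    exact h1.congr_fun (fun t ht => (abs_deriv_smul_eq hp f hx t ht).symm) measurableSet_Ioo
  rcases lt_or_gt_of_ne hp with hneg | hpos
  · rw [if_neg (by linarith)] at key
    have horder : y ^ p ≤ x ^ p := (Real.rpow_lt_rpow_of_neg hx hxy hneg).le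
    have : IntegrableOn (fun u => f (u ^ (1/p))) (Ioo (y ^ p) (x ^ p)) volume := key.mpr hint'
    refine IntervalIntegrable.symm ?_
    rw [intervalIntegrable_iff, uIoc_of_le horder]
    rwa [integrableOn_Ioc_iff_integrableOn_Ioo]
  · rw [if_pos hpos] at key
    have horder : x ^ p ≤ y ^ p := (Real.rpow_lt_rpow hx.le hxy hpos).le
    have : IntegrableOn (fun u => f (u ^ (1/p))) (Ioo (x ^ p) (y ^ p)) volume := key.mpr hint'
    rw [intervalIntegrable_iff, uIoc_of_le horder]
    rwa [integrableOn_Ioc_iff_integrableOn_Ioo]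

/-- Core Hermite–Hadamard for midpoint-style convexity hypothesis. -/
lemma hh_core {A B : ℝ} (hAB : A < B) (h : ℝ → ℝ)
    (hc : ∀ u ∈ Icc A B, ∀ v ∈ Icc A B, ∀ t ∈ Icc (0:ℝ) 1,
      h (t * u + (1 - t) * v) ≤ t * h u + (1 - t) * h v)
    (hi : IntervalIntegrable h volume A B) :
    (B - A) * h ((A + B) / 2) ≤ (∫ t in A..B, h t) ∧
      (∫ t in A..B, h t) ≤ (B - A) * (h A + h B) / 2 := by
  have hrefl : IntervalIntegrable (fun t => h (A + B - t)) volume A B := by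
    simpa using (hi.comp_sub_left (A + B)).symm
  constructor
  · have key : ∀ t ∈ Icc A B, h ((A + B) / 2) ≤ (h t + h (A + B - t)) / 2 := by
      intro t ht
      have hmem : A + B - t ∈ Icc A B := ⟨by linarith [ht.2], by linarith [ht.1]⟩
      have := hc t ht (A + B - t) hmem (1/2) ⟨by norm_num, by norm_num⟩
      have harg : (1/2 : ℝ) * t + (1 - 1/2) * (A + B - t) = (A + B) / 2 := by ring
      rw [harg] at this
      linarith
    have hmono := intervalIntegral.integral_mono_on (μ := volume)
      (f := fun _ => h ((A + B) / 2)) (g := fun t => (h t + h (A + B - t)) / 2) hAB.le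
      intervalIntegrable_const ((hi.add hrefl).div_const 2) key
    have e1 : (∫ _t in A..B, h ((A + B) / 2)) = (B - A) * h ((A + B) / 2) := by
      rw [intervalIntegral.integral_const, smul_eq_mul]
    have e2 : (∫ t in A..B, (h t + h (A + B - t)) / 2)
        = ((∫ t in A..B, h t) + ∫ t in A..B, h (A + B - t)) / 2 := by
      rw [← intervalIntegral.integral_add hi hrefl, ← intervalIntegral.integral_div]
    have e3 : (∫ t in A..B, h (A + B - t)) = ∫ t in A..B, h t := by
      rw [intervalIntegral.integral_comp_sub_left h (A + B)]
      norm_num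
    rw [e1, e2, e3] at hmono
    linarith
  · have hBA : (0:ℝ) < B - A := by linarith
    have key : ∀ t ∈ Icc A B, h t ≤ ((B - t) * h A + (t - A) * h B) / (B - A) := by
      intro t ht
      have hl : (B - t) / (B - A) ∈ Icc (0:ℝ) 1 := by
        constructor
        · exact div_nonneg (by linarith [ht.2]) hBA.le
        · rw [div_le_one hBA]; linarith [ht.1]
      have := hc A ⟨le_refl A, hAB.le⟩ B ⟨hAB.le, le_refl B⟩ ((B - t) / (B - A)) hl
      have harg : (B - t) / (B - A) * A + (1 - (B - t) / (B - A)) * B = t := by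
        field_simp
        ring
      rw [harg] at this
      have h1m : 1 - (B - t) / (B - A) = (t - A) / (B - A) := by
        field_simp
        ring
      rw [h1m] at this
      calc h t ≤ (B - t) / (B - A) * h A + (t - A) / (B - A) * h B := this
        _ = ((B - t) * h A + (t - A) * h B) / (B - A) := by ring
    have hcont : IntervalIntegrable (fun t => ((B - t) * h A + (t - A) * h B) / (B - A))
        volume A B := by
      apply Continuous.intervalIntegrable
      fun_prop
    have hmono := intervalIntegral.integral_mono_on (μ := volume) hAB.le hi hcont key
    have e4 : (∫ t in A..B, ((B - t) * h A + (t - A) * h B) / (B - A))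
        = (B - A) * (h A + h B) / 2 := by
      have efun : (fun t : ℝ => ((B - t) * h A + (t - A) * h B) / (B - A))
          = fun t => (B * h A - A * h B) / (B - A) + (h B - h A) / (B - A) * t := by
        funext t
        field_simp
        ring
      rw [efun, intervalIntegral.integral_add intervalIntegrable_const
        ((intervalIntegrable_id (μ := volume) (a := A) (b := B)).const_mul _),
        intervalIntegral.integral_const, intervalIntegral.integral_const_mul, integral_id,
        smul_eq_mul]
      field_simp
      ring
    rw [e4] at hmono
    exact hmono

end HHAux

open HHAux

theorem hermite_hadamard_subinterval (p a b : ℝ) (hp : p ≠ 0) (ha : 0 < a)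
    (hab : a < b) (f : ℝ → ℝ) (hf : PConvexOn p a b (PSym p a b f))
    (hint : IntervalIntegrable (fun t => f t * t ^ (p - 1)) volume a b) :
    ∀ x ∈ Set.Icc a b, ∀ y ∈ Set.Icc a b, x ≠ y →
      (1/2) * (f (((x ^ p + y ^ p) / 2) ^ (1/p)) +
          f ((a ^ p + b ^ p - (x ^ p + y ^ p) / 2) ^ (1/p))) ≤
        (p / (2 * (y ^ p - x ^ p))) *
          ((∫ t in x..y, f t * t ^ (p - 1)) +
            ∫ t in ((a ^ p + b ^ p - y ^ p) ^ (1/p))..((a ^ p + b ^ p - x ^ p) ^ (1/p)),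
              f t * t ^ (p - 1)) ∧
      (p / (2 * (y ^ p - x ^ p))) *
          ((∫ t in x..y, f t * t ^ (p - 1)) +
            ∫ t in ((a ^ p + b ^ p - y ^ p) ^ (1/p))..((a ^ p + b ^ p - x ^ p) ^ (1/p)),
              f t * t ^ (p - 1)) ≤
        (1/4) * (f x + f y + f ((a ^ p + b ^ p - x ^ p) ^ (1/p)) +
          f ((a ^ p + b ^ p - y ^ p) ^ (1/p))) := by
  have hb : 0 < b := ha.trans hab
  have hap : 0 < a ^ p := Real.rpow_pos_of_pos ha p
  have hbp : 0 < b ^ p := Real.rpow_pos_of_pos hb p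
  set m : ℝ := min (a ^ p) (b ^ p) with hm
  set M : ℝ := max (a ^ p) (b ^ p) with hM
  have hm0 : 0 < m := lt_min hap hbp
  have hmM : m + M = a ^ p + b ^ p := min_add_max _ _
  -- membership facts
  have hmemP : ∀ x ∈ Icc a b, x ^ p ∈ Icc m M := by
    intro x hx
    rcases lt_or_gt_of_ne hp with hneg | hpos
    · have hx0 : 0 < x := ha.trans_le hx.1
      exact ⟨le_trans (min_le_right _ _) (Real.rpow_le_rpow_of_nonpos hx0 hx.2 hneg.le),
        le_trans (Real.rpow_le_rpow_of_nonpos ha hx.1 hneg.le) (le_max_left _ _)⟩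
    · exact ⟨le_trans (min_le_left _ _) (Real.rpow_le_rpow ha.le hx.1 hpos.le),
        le_trans (Real.rpow_le_rpow (ha.le.trans hx.1) hx.2 hpos.le) (le_max_right _ _)⟩
  have hmemI : ∀ u ∈ Icc m M, 0 < u ∧ u ^ (1/p) ∈ Icc a b := by
    intro u hu
    have hu0 : 0 < u := lt_of_lt_of_le hm0 hu.1
    refine ⟨hu0, ?_⟩
    rcases lt_or_gt_of_ne hp with hneg | hpos
    · have h1 : b ^ p ≤ a ^ p := Real.rpow_le_rpow_of_nonpos ha hab.le hneg.le
      rw [hm, hM, min_eq_right h1, max_eq_left h1] at hu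
      constructor
      · have := Real.rpow_le_rpow_of_nonpos hu0 hu.2 (one_div_neg.mpr hneg).le
        rwa [rpow_rpow_inv' hp ha] at this
      · have := Real.rpow_le_rpow_of_nonpos hbp hu.1 (one_div_neg.mpr hneg).le
        rwa [rpow_rpow_inv' hp hb] at this
    · have h1 : a ^ p ≤ b ^ p := Real.rpow_le_rpow ha.le hab.le hpos.le
      rw [hm, hM, min_eq_left h1, max_eq_right h1] at hu
      constructor
      · have := Real.rpow_le_rpow hap.le hu.1 (one_div_pos.mpr hpos).le
        rwa [rpow_rpow_inv' hp ha] at this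
      · have := Real.rpow_le_rpow hu0.le hu.2 (one_div_pos.mpr hpos).le
        rwa [rpow_rpow_inv' hp hb] at this
  -- the transformed function H
  set H : ℝ → ℝ := fun u => f (u ^ (1/p)) + f ((a ^ p + b ^ p - u) ^ (1/p)) with hH
  -- convexity of H on [m, M]
  have hHconv : ∀ u ∈ Icc m M, ∀ v ∈ Icc m M, ∀ t ∈ Icc (0:ℝ) 1,
      H (t * u + (1 - t) * v) ≤ t * H u + (1 - t) * H v := by
    intro u hu v hv t ht
    obtain ⟨hu0, hu'⟩ := hmemI u hu
    obtain ⟨hv0, hv'⟩ := hmemI v hv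
    have hw : t * u + (1 - t) * v ∈ Icc m M := by
      constructor
      · nlinarith [ht.1, ht.2, hu.1, hv.1]
      · nlinarith [ht.1, ht.2, hu.2, hv.2]
    obtain ⟨hw0, _⟩ := hmemI _ hw
    have key := hf (u ^ (1/p)) hu' (v ^ (1/p)) hv' t ht
    rw [rpow_inv_rpow' hp hu0, rpow_inv_rpow' hp hv0] at key
    simp only [PSym, rpow_inv_rpow' hp hu0, rpow_inv_rpow' hp hv0,
      rpow_inv_rpow' hp hw0] at key
    simp only [hH]
    linarith
  -- interval integrability of H on m..M (as a^p..b^p)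
  have hFint : IntervalIntegrable (fun u => f (u ^ (1/p))) volume (a ^ p) (b ^ p) :=
    integrable_subst hp f ha hab hint
  have hFcint : IntervalIntegrable (fun u => f ((a ^ p + b ^ p - u) ^ (1/p)))
      volume (a ^ p) (b ^ p) := by
    have := hFint.comp_sub_left (a ^ p + b ^ p)
    simpa using this.symm
  have hHint : IntervalIntegrable H volume (a ^ p) (b ^ p) := hFint.add hFcint
  -- main claim assuming x^p < y^p
  have key : ∀ x ∈ Icc a b, ∀ y ∈ Icc a b, x ^ p < y ^ p →
      (1/2) * (f (((x ^ p + y ^ p) / 2) ^ (1/p)) +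
          f ((a ^ p + b ^ p - (x ^ p + y ^ p) / 2) ^ (1/p))) ≤
        (p / (2 * (y ^ p - x ^ p))) *
          ((∫ t in x..y, f t * t ^ (p - 1)) +
            ∫ t in ((a ^ p + b ^ p - y ^ p) ^ (1/p))..((a ^ p + b ^ p - x ^ p) ^ (1/p)),
              f t * t ^ (p - 1)) ∧
      (p / (2 * (y ^ p - x ^ p))) *
          ((∫ t in x..y, f t * t ^ (p - 1)) +
            ∫ t in ((a ^ p + b ^ p - y ^ p) ^ (1/p))..((a ^ p + b ^ p - x ^ p) ^ (1/p)),
              f t * t ^ (p - 1)) ≤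
        (1/4) * (f x + f y + f ((a ^ p + b ^ p - x ^ p) ^ (1/p)) +
          f ((a ^ p + b ^ p - y ^ p) ^ (1/p))) := by
    intro x hx y hy hAB
    have hx0 : 0 < x := ha.trans_le hx.1
    have hy0 : 0 < y := ha.trans_le hy.1
    have hA : x ^ p ∈ Icc m M := hmemP x hx
    have hB : y ^ p ∈ Icc m M := hmemP y hy
    have hcA : 0 < a ^ p + b ^ p - x ^ p := by
      have := hA.2; have := hA.1; rw [← hmM]; nlinarith [hm0]
    have hcB : 0 < a ^ p + b ^ p - y ^ p := by
      have := hB.2; have := hB.1; rw [← hmM]; nlinarith [hm0]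
    have hσx : 0 < (a ^ p + b ^ p - x ^ p) ^ (1/p) := Real.rpow_pos_of_pos hcA _
    have hσy : 0 < (a ^ p + b ^ p - y ^ p) ^ (1/p) := Real.rpow_pos_of_pos hcB _
    -- integral identities
    have e1 : (∫ u in x ^ p..y ^ p, f (u ^ (1/p)))
        = p * ∫ t in x..y, f t * t ^ (p - 1) := subst_key hp f hx0 hy0
    have e2 : (∫ u in x ^ p..y ^ p, f ((a ^ p + b ^ p - u) ^ (1/p)))
        = p * ∫ t in ((a ^ p + b ^ p - y ^ p) ^ (1/p))..((a ^ p + b ^ p - x ^ p) ^ (1/p)),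
            f t * t ^ (p - 1) := by
      have s1 := subst_key hp f hσy hσx
      rw [rpow_inv_rpow' hp hcB, rpow_inv_rpow' hp hcA] at s1
      rw [intervalIntegral.integral_comp_sub_left (fun u => f (u ^ (1/p))) (a ^ p + b ^ p)]
      exact s1
    -- integrability on x^p..y^p
    have hsub : uIcc (x ^ p) (y ^ p) ⊆ uIcc (a ^ p) (b ^ p) := by
      rw [uIcc_of_le hAB.le]
      intro u hu
      rw [Set.mem_uIcc]
      rcases le_total (a ^ p) (b ^ p) with h | h
      · left
        constructor
        · calc a ^ p = min (a ^ p) (b ^ p) := (min_eq_left h).symm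
            _ ≤ x ^ p := hA.1
            _ ≤ u := hu.1
        · calc u ≤ y ^ p := hu.2
            _ ≤ max (a ^ p) (b ^ p) := hB.2
            _ = b ^ p := max_eq_right h
      · right
        constructor
        · calc b ^ p = min (a ^ p) (b ^ p) := (min_eq_right h).symm
            _ ≤ x ^ p := hA.1
            _ ≤ u := hu.1
        · calc u ≤ y ^ p := hu.2
            _ ≤ max (a ^ p) (b ^ p) := hB.2
            _ = a ^ p := max_eq_left h
    have hFA : IntervalIntegrable (fun u => f (u ^ (1/p))) volume (x ^ p) (y ^ p) :=
      hFint.mono_set hsub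
    have hFcA : IntervalIntegrable (fun u => f ((a ^ p + b ^ p - u) ^ (1/p)))
        volume (x ^ p) (y ^ p) := hFcint.mono_set hsub
    have hHA : IntervalIntegrable H volume (x ^ p) (y ^ p) := hFA.add hFcA
    have e3 : (∫ u in x ^ p..y ^ p, H u)
        = (∫ u in x ^ p..y ^ p, f (u ^ (1/p)))
          + ∫ u in x ^ p..y ^ p, f ((a ^ p + b ^ p - u) ^ (1/p)) :=
      intervalIntegral.integral_add hFA hFcA
    -- apply core HH to H
    have hcore := hh_core hAB H
      (fun u hu v hv t ht => hHconv u (Icc_subset_Icc hA.1 hB.2 hu)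
        v (Icc_subset_Icc hA.1 hB.2 hv) t ht) hHA
    have hd : (0:ℝ) < y ^ p - x ^ p := by linarith
    -- middle term equals 1/(2 d) * ∫ H
    have Meq : (p / (2 * (y ^ p - x ^ p))) *
        ((∫ t in x..y, f t * t ^ (p - 1)) +
          ∫ t in ((a ^ p + b ^ p - y ^ p) ^ (1/p))..((a ^ p + b ^ p - x ^ p) ^ (1/p)),
            f t * t ^ (p - 1))
        = 1 / (2 * (y ^ p - x ^ p)) * ∫ u in x ^ p..y ^ p, H u := by
      rw [e3, e1, e2]
      field_simp
    rw [Meq]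
    constructor
    · have h1 := mul_le_mul_of_nonneg_left hcore.1
        (le_of_lt (by positivity : (0:ℝ) < 1 / (2 * (y ^ p - x ^ p))))
      have h2 : 1 / (2 * (y ^ p - x ^ p)) * ((y ^ p - x ^ p) * H ((x ^ p + y ^ p) / 2))
          = 1/2 * H ((x ^ p + y ^ p) / 2) := by
        field_simp
      rw [h2] at h1
      calc (1/2) * (f (((x ^ p + y ^ p) / 2) ^ (1/p)) +
            f ((a ^ p + b ^ p - (x ^ p + y ^ p) / 2) ^ (1/p)))
          = 1/2 * H ((x ^ p + y ^ p) / 2) := by simp only [hH]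
        _ ≤ _ := h1
    · have h1 := mul_le_mul_of_nonneg_left hcore.2
        (le_of_lt (by positivity : (0:ℝ) < 1 / (2 * (y ^ p - x ^ p))))
      have h2 : 1 / (2 * (y ^ p - x ^ p)) * ((y ^ p - x ^ p) * (H (x ^ p) + H (y ^ p)) / 2)
          = 1/4 * (H (x ^ p) + H (y ^ p)) := by
        field_simp
        ring
      rw [h2] at h1
      have hHx : H (x ^ p) = f x + f ((a ^ p + b ^ p - x ^ p) ^ (1/p)) := by
        simp only [hH, rpow_rpow_inv' hp hx0]
      have hHy : H (y ^ p) = f y + f ((a ^ p + b ^ p - y ^ p) ^ (1/p)) := by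
        simp only [hH, rpow_rpow_inv' hp hy0]
      calc _ ≤ 1/4 * (H (x ^ p) + H (y ^ p)) := h1
        _ = (1/4) * (f x + f y + f ((a ^ p + b ^ p - x ^ p) ^ (1/p)) +
            f ((a ^ p + b ^ p - y ^ p) ^ (1/p))) := by rw [hHx, hHy]; ring
  -- now handle general x, y with x ≠ y
  intro x hx y hy hxy
  have hx0 : 0 < x := ha.trans_le hx.1
  have hy0 : 0 < y := ha.trans_le hy.1
  have hne : x ^ p ≠ y ^ p := by
    intro h
    apply hxy
    have h2 : (x ^ p) ^ (1/p) = (y ^ p) ^ (1/p) := congrArg (fun u : ℝ => u ^ (1/p)) h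
    rwa [rpow_rpow_inv' hp hx0, rpow_rpow_inv' hp hy0] at h2
  rcases lt_or_gt_of_ne hne with hlt | hgt
  · exact key x hx y hy hlt
  · obtain ⟨G1, G2⟩ := key y hy x hx hgt
    -- rewrite the swapped statement into the original one
    have ecomm : y ^ p + x ^ p = x ^ p + y ^ p := add_comm _ _
    rw [ecomm] at G1
    have eint1 : (∫ t in y..x, f t * t ^ (p - 1)) = -∫ t in x..y, f t * t ^ (p - 1) :=
      intervalIntegral.integral_symm x y
    have eint2 : (∫ t in ((a ^ p + b ^ p - x ^ p) ^ (1/p))..((a ^ p + b ^ p - y ^ p) ^ (1/p)),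
          f t * t ^ (p - 1))
        = -∫ t in ((a ^ p + b ^ p - y ^ p) ^ (1/p))..((a ^ p + b ^ p - x ^ p) ^ (1/p)),
            f t * t ^ (p - 1) :=
      intervalIntegral.integral_symm _ _
    have emid : (p / (2 * (x ^ p - y ^ p))) *
          ((∫ t in y..x, f t * t ^ (p - 1)) +
            ∫ t in ((a ^ p + b ^ p - x ^ p) ^ (1/p))..((a ^ p + b ^ p - y ^ p) ^ (1/p)),
              f t * t ^ (p - 1))
        = (p / (2 * (y ^ p - x ^ p))) *
          ((∫ t in x..y, f t * t ^ (p - 1)) +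
            ∫ t in ((a ^ p + b ^ p - y ^ p) ^ (1/p))..((a ^ p + b ^ p - x ^ p) ^ (1/p)),
              f t * t ^ (p - 1)) := by
      rw [eint1, eint2, show 2 * (x ^ p - y ^ p) = -(2 * (y ^ p - x ^ p)) by ring, div_neg]
      ring
    rw [emid] at G1 G2
    exact ⟨G1, by linarith⟩
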